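/- For a sequence with vanishing odd moments, the odd-size Hankel determinant factorizes as \hat{H}_{2n+1} = H^0_{n+1} · H^1_n. -/

import Mathlib

/-- For a sequence `s` with vanishing odd moments, the odd-size Hankel determinant
factorizes: `Ĥ_{2n+1} = H⁰_{n+1} · H¹_n`, where `c_j = s_{2j}`. -/
theorem hankel_odd_factorization (s : ℕ → ℝ) (hodd : ∀ j, s (2 * j + 1) = 0) (n : ℕ) :
    (Matrix.of fun i j : Fin (2 * n + 1) => s (i.val + j.val)).det =
      (Matrix.of fun i j : Fin (n + 1) => s (2 * (i.val + j.val))).det *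
      (Matrix.of fun i j : Fin n => s (2 * (i.val + j.val + 1))).det := by
  classical
  -- parity reindexing equivalence
  let e : Fin (n + 1) ⊕ Fin n ≃ Fin (2 * n + 1) :=
    { toFun := Sum.elim (fun i => ⟨2 * i.val, by omega⟩) (fun j => ⟨2 * j.val + 1, by omega⟩)
      invFun := fun k =>
        if h : k.val % 2 = 0 then Sum.inl ⟨k.val / 2, by omega⟩
        else Sum.inr ⟨k.val / 2, by omega⟩
      left_inv := by
        rintro (i | j)
        · dsimp only [Sum.elim_inl]
          rw [dif_pos (by omega)]
          congr 1
          exact Fin.ext (by simp only [Fin.val_mk]; omega)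
        · dsimp only [Sum.elim_inr]
          rw [dif_neg (by omega)]
          congr 1
          exact Fin.ext (by simp only [Fin.val_mk]; omega)
      right_inv := by
        intro k
        dsimp only
        by_cases h : k.val % 2 = 0
        · rw [dif_pos h]
          exact Fin.ext (by simp; omega)
        · rw [dif_neg h]
          exact Fin.ext (by simp; omega) }
  have hM : (Matrix.of fun i j : Fin (2 * n + 1) => s (i.val + j.val)) =
      Matrix.reindex e e
        (Matrix.fromBlocks
          (Matrix.of fun i j : Fin (n + 1) => s (2 * (i.val + j.val))) 0 0
          (Matrix.of fun i j : Fin n => s (2 * (i.val + j.val + 1)))) := by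
    ext i j
    rw [Matrix.reindex_apply, Matrix.submatrix_apply]
    rcases hi : e.symm i with a | a <;> rcases hj : e.symm j with b | b
    all_goals
      have hi' : i = e (e.symm i) := (e.apply_symm_apply i).symm
      have hj' : j = e (e.symm j) := (e.apply_symm_apply j).symm
      rw [hi] at hi'
      rw [hj] at hj'
    · simp only [Matrix.fromBlocks_apply₁₁, Matrix.of_apply, hi', hj']
      simp only [Equiv.coe_fn_mk, Sum.elim_inl, e]
      congr 1
      omega
    · simp only [Matrix.fromBlocks_apply₁₂, Matrix.zero_apply, Matrix.of_apply, hi', hj']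
      simp only [Equiv.coe_fn_mk, Sum.elim_inl, Sum.elim_inr, e]
      have : 2 * a.val + (2 * b.val + 1) = 2 * (a.val + b.val) + 1 := by omega
      rw [this, hodd]
    · simp only [Matrix.fromBlocks_apply₂₁, Matrix.zero_apply, Matrix.of_apply, hi', hj']
      simp only [Equiv.coe_fn_mk, Sum.elim_inl, Sum.elim_inr, e]
      have : 2 * a.val + 1 + 2 * b.val = 2 * (a.val + b.val) + 1 := by omega
      rw [this, hodd]
    · simp only [Matrix.fromBlocks_apply₂₂, Matrix.of_apply, hi', hj']
      simp only [Equiv.coe_fn_mk, Sum.elim_inr, e]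
      congr 1
      omega
  rw [hM, Matrix.det_reindex_self, Matrix.det_fromBlocks_zero₂₁]
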